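/- Let j ≥ 2, let p ∈ ℝ[x₁,…,x_j], let S ⊆ ℝ^{j−1} be a nonempty connected set, and let f, g : ℝ^{j−1} → ℝ be continuous on S with f(r) < g(r) for all r ∈ S. Let C := {(r,t) ∈ ℝ^{j−1} × ℝ : r ∈ S and f(r) < t < g(r)}. If p(r,t) ≠ 0 for all (r,t) ∈ C, then p is sign-invariant over C; that is, either p(r,t) > 0 for all (r,t) ∈ C or p(r,t) < 0 for all (r,t) ∈ C. -/

import Mathlib

open Set

/-- Evaluation of a polynomial over multivariate polynomials is jointly continuous. -/
lemma eval₂_continuous {n : ℕ} (p : Polynomial (MvPolynomial (Fin n) ℝ)) :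
    Continuous (fun x : (Fin n → ℝ) × ℝ =>
      Polynomial.eval₂ (MvPolynomial.eval x.1) x.2 p) := by
  have : (fun x : (Fin n → ℝ) × ℝ =>
      Polynomial.eval₂ (MvPolynomial.eval x.1) x.2 p) =
      fun x => ∑ i ∈ p.support, MvPolynomial.eval x.1 (p.coeff i) * x.2 ^ i := by
    funext x
    rw [Polynomial.eval₂_eq_sum, Polynomial.sum]
  rw [this]
  refine continuous_finset_sum _ fun i _ => ?_
  exact ((MvPolynomial.continuous_eval _).comp continuous_fst).mul
    ((continuous_pow i).comp continuous_snd)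

/-- Let `j ≥ 2`, let `p ∈ ℝ[x₁,…,x_j]` (viewed as univariate in `x_j`
over `ℝ[x₁,…,x_{j-1}]`), let `S ⊆ ℝ^{j-1}` be a nonempty connected set, and let
`f, g` be continuous on `S` with `f(r) < g(r)` for all `r ∈ S`. Let
`C := {(r,t) : r ∈ S and f(r) < t < g(r)}`. If `p(r,t) ≠ 0` on all of `C`, then `p` is
sign-invariant over `C`: either `p > 0` on all of `C` or `p < 0` on all of `C`. -/
theorem stmt_9 (j : ℕ) (hj : 2 ≤ j)
    (p : Polynomial (MvPolynomial (Fin (j - 1)) ℝ))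
    (S : Set (Fin (j - 1) → ℝ)) (hS : IsConnected S)
    (f g : (Fin (j - 1) → ℝ) → ℝ)
    (hf : ContinuousOn f S) (hg : ContinuousOn g S)
    (hfg : ∀ r ∈ S, f r < g r)
    (hnz : ∀ r ∈ S, ∀ t : ℝ, f r < t → t < g r →
      Polynomial.eval₂ (MvPolynomial.eval r) t p ≠ 0) :
    (∀ r ∈ S, ∀ t : ℝ, f r < t → t < g r →
        0 < Polynomial.eval₂ (MvPolynomial.eval r) t p) ∨
      (∀ r ∈ S, ∀ t : ℝ, f r < t → t < g r →
        Polynomial.eval₂ (MvPolynomial.eval r) t p < 0) := by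
  set F : (Fin (j - 1) → ℝ) × ℝ → ℝ :=
    fun x => Polynomial.eval₂ (MvPolynomial.eval x.1) x.2 p with hF
  -- midpoint map
  set m : (Fin (j - 1) → ℝ) → ℝ := fun r => (f r + g r) / 2 with hm
  have hmid : ∀ r ∈ S, f r < m r ∧ m r < g r := by
    intro r hr
    constructor <;> simp only [hm] <;> linarith [hfg r hr]
  set M : Set ((Fin (j - 1) → ℝ) × ℝ) := (fun r => (r, m r)) '' S with hM
  have hMpre : IsPreconnected M := by
    refine hS.isPreconnected.image _ ?_
    exact continuousOn_id.prodMk ((hf.add hg).div_const 2)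
  set C : Set ((Fin (j - 1) → ℝ) × ℝ) :=
    ⋃ r ∈ S, ({r} : Set (Fin (j - 1) → ℝ)) ×ˢ Ioo (f r) (g r) with hC
  have hMC : M ⊆ C := by
    rintro _ ⟨r, hr, rfl⟩
    exact mem_iUnion₂.2 ⟨r, hr, by simp [hmid r hr |>.1, hmid r hr |>.2]⟩
  have hCpre : IsPreconnected C := by
    have : C = ⋃ r ∈ S, (({r} : Set (Fin (j - 1) → ℝ)) ×ˢ Ioo (f r) (g r) ∪ M) := by
      apply Subset.antisymm
      · exact iUnion₂_mono fun r hr => subset_union_left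
      · intro x hx
        rcases mem_iUnion₂.1 hx with ⟨r, hr, hx⟩
        rcases hx with hx | hx
        · exact mem_iUnion₂.2 ⟨r, hr, hx⟩
        · exact hMC hx
    rw [this]
    obtain ⟨r₀, hr₀⟩ := hS.nonempty
    rw [← sUnion_image]
    apply isPreconnected_sUnion ((r₀, m r₀))
    · rintro _ ⟨r, hr, rfl⟩
      exact mem_union_right _ ⟨r₀, hr₀, rfl⟩
    · rintro _ ⟨r, hr, rfl⟩
      refine IsPreconnected.union (r, m r) ?_ ⟨r, hr, rfl⟩ ?_ hMpre
      · exact ⟨rfl, (hmid r hr).1, (hmid r hr).2⟩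
      · exact isPreconnected_singleton.prod isPreconnected_Ioo
  -- image of C under F is preconnected
  have hFC : IsPreconnected (F '' C) := hCpre.image F (eval₂_continuous p).continuousOn
  have hmemC : ∀ r ∈ S, ∀ t : ℝ, f r < t → t < g r → (r, t) ∈ C := by
    intro r hr t h1 h2
    exact mem_iUnion₂.2 ⟨r, hr, rfl, h1, h2⟩
  by_contra hcon
  push_neg at hcon
  obtain ⟨⟨r₁, hr₁, t₁, ht₁, ht₁', hpos⟩, ⟨r₂, hr₂, t₂, ht₂, ht₂', hneg⟩⟩ := hcon
  have h1 : F (r₁, t₁) ≤ 0 := hpos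
  have h2 : 0 ≤ F (r₂, t₂) := hneg
  have h0 : (0 : ℝ) ∈ F '' C := by
    have := hFC.ordConnected.out ⟨(r₁, t₁), hmemC r₁ hr₁ t₁ ht₁ ht₁', rfl⟩
      ⟨(r₂, t₂), hmemC r₂ hr₂ t₂ ht₂ ht₂', rfl⟩
    exact this ⟨h1, h2⟩
  obtain ⟨x, hxC, hx0⟩ := h0
  rcases mem_iUnion₂.1 hxC with ⟨r, hr, hx⟩
  obtain ⟨hx1, hx2⟩ := hx
  rcases mem_singleton_iff.1 hx1 with h
  exact hnz r hr x.2 hx2.1 hx2.2 (by rw [hF] at hx0; rw [← h]; exact hx0)
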